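/- Let σ = (σ_0,…,σ_n) be a changemaker vector, let x be a positive integer, and let a be a nonnegative integer with a ≥ xp − |σ|₁. Then V^σ_{a+1} − V^σ_a ≥ x. -/
import Mathlib


open Finset

/-- `σ` is a changemaker vector: all entries are positive and every integer `k` with
`0 ≤ k ≤ σ_0 + ⋯ + σ_n` is the sum of a subset of the entries. -/
def IsChangemaker {n : ℕ} (σ : Fin (n + 1) → ℕ) : Prop :=
  (∀ i, 0 < σ i) ∧
    ∀ k : ℕ, k ≤ ∑ i, σ i → ∃ A : Finset (Fin (n + 1)), ∑ i ∈ A, σ i = k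

/-- `Tcm σ m = T^σ_m`, the maximum of `σ·α` over all `α ∈ ℤ_{≥0}^{n+1}` with
`Σ_j α_j (α_j + 1) ≤ 2m` (the maximum exists: the set is nonempty and bounded). -/
noncomputable def Tcm {n : ℕ} (σ : Fin (n + 1) → ℕ) (m : ℕ) : ℕ :=
  sSup {t : ℕ | ∃ α : Fin (n + 1) → ℕ,
    (∑ j, α j * (α j + 1)) ≤ 2 * m ∧ t = ∑ j, σ j * α j}

/-- `Vcm σ i = V^σ_i`, the `i`-th relevant coefficient of `σ`:
the least `m` with `T^σ_m ≥ i` (and `V^σ_0 = 0`). -/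
noncomputable def Vcm {n : ℕ} (σ : Fin (n + 1) → ℕ) (i : ℕ) : ℕ :=
  sInf {m : ℕ | i ≤ Tcm σ m}

lemma tset_bdd {n : ℕ} (σ : Fin (n + 1) → ℕ) (m : ℕ) :
    BddAbove {t : ℕ | ∃ α : Fin (n + 1) → ℕ,
      (∑ j, α j * (α j + 1)) ≤ 2 * m ∧ t = ∑ j, σ j * α j} := by
  refine ⟨(∑ j, σ j) * (2 * m), ?_⟩
  rintro t ⟨α, hα, rfl⟩
  have hb : ∀ j, α j ≤ 2 * m := by
    intro j
    calc α j ≤ α j * (α j + 1) := Nat.le_mul_of_pos_right _ (Nat.succ_pos _)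
    _ ≤ ∑ j, α j * (α j + 1) :=
      Finset.single_le_sum (f := fun j => α j * (α j + 1)) (fun i _ => Nat.zero_le _) (mem_univ j)
    _ ≤ 2 * m := hα
  calc ∑ j, σ j * α j ≤ ∑ j, σ j * (2 * m) :=
        Finset.sum_le_sum fun j _ => Nat.mul_le_mul_left _ (hb j)
  _ = (∑ j, σ j) * (2 * m) := by rw [Finset.sum_mul]

lemma le_Tcm {n : ℕ} (σ : Fin (n + 1) → ℕ) (m : ℕ) (α : Fin (n + 1) → ℕ)
    (h : (∑ j, α j * (α j + 1)) ≤ 2 * m) : (∑ j, σ j * α j) ≤ Tcm σ m :=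
  le_csSup (tset_bdd σ m) ⟨α, h, rfl⟩

lemma Tcm_exists {n : ℕ} (σ : Fin (n + 1) → ℕ) (m : ℕ) :
    ∃ α : Fin (n + 1) → ℕ,
      (∑ j, α j * (α j + 1)) ≤ 2 * m ∧ Tcm σ m = ∑ j, σ j * α j :=
  Nat.sSup_mem (⟨0, fun _ => 0, by simp, by simp⟩ : Set.Nonempty
    {t : ℕ | ∃ α : Fin (n + 1) → ℕ,
      (∑ j, α j * (α j + 1)) ≤ 2 * m ∧ t = ∑ j, σ j * α j}) (tset_bdd σ m)

lemma Vcm_spec {n : ℕ} (σ : Fin (n + 1) → ℕ) (hpos : ∀ i, 0 < σ i) (i : ℕ) :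
    i ≤ Tcm σ (Vcm σ i) := by
  have hne : ∃ m, i ≤ Tcm σ m := by
    refine ⟨i * (i + 1), ?_⟩
    have h1 : (∑ j : Fin (n+1), (if j = 0 then i else 0) * ((if j = 0 then i else 0) + 1))
        ≤ 2 * (i * (i + 1)) := by
      have : ∀ j : Fin (n+1), (if j = 0 then i else 0) * ((if j = 0 then i else 0) + 1)
          = if j = 0 then i * (i + 1) else 0 := by
        intro j; split_ifs <;> simp
      rw [Finset.sum_congr rfl fun j _ => this j, Finset.sum_ite_eq' univ (0 : Fin (n+1))]
      simp; omega
    have h2 := le_Tcm σ (i * (i + 1)) (fun j => if j = 0 then i else 0) h1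
    refine le_trans ?_ h2
    have : ∀ j : Fin (n+1), σ j * (if j = 0 then i else 0) = if j = 0 then σ 0 * i else 0 := by
      intro j; split_ifs with h <;> simp [h]
    rw [Finset.sum_congr rfl fun j _ => this j, Finset.sum_ite_eq' univ (0 : Fin (n+1))]
    simp
    exact Nat.le_mul_of_pos_left _ (hpos 0)
  exact Nat.sInf_mem hne

theorem stmt_7 {n : ℕ} (σ : Fin (n + 1) → ℕ) (hσ : IsChangemaker σ)
    (x : ℕ) (hx : 0 < x) (a : ℕ)
    (ha : x * (∑ i, (σ i) ^ 2) ≤ a + ∑ i, σ i) :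
    Vcm σ a + x ≤ Vcm σ (a + 1) := by
  obtain ⟨hpos, hcm⟩ := hσ
  set p := ∑ i, (σ i) ^ 2 with hp
  set v1 := Vcm σ (a + 1) with hv1
  have hTv1 : a + 1 ≤ Tcm σ v1 := Vcm_spec σ hpos (a + 1)
  obtain ⟨α, hαc, hαv⟩ := Tcm_exists σ v1
  have hval : a + 1 ≤ ∑ j, σ j * α j := hαv ▸ hTv1
  -- choose j0 maximizing (α j + 1)/σ j
  obtain ⟨j0, -, hj0⟩ := Finset.exists_max_image Finset.univ
    (fun j => ((α j : ℚ) + 1) / (σ j : ℚ)) ⟨0, mem_univ 0⟩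
  have hmax : ∀ i, σ j0 * (α i + 1) ≤ σ i * (α j0 + 1) := by
    intro i
    have h := hj0 i (mem_univ i)
    have h1 : (0:ℚ) < (σ i : ℚ) := by exact_mod_cast hpos i
    have h2 : (0:ℚ) < (σ j0 : ℚ) := by exact_mod_cast hpos j0
    rw [div_le_div_iff₀ h1 h2] at h
    have : (σ j0 : ℚ) * ((α i : ℚ) + 1) ≤ (σ i : ℚ) * ((α j0 : ℚ) + 1) := by linarith
    exact_mod_cast this
  have hp1 : 0 < p := by
    rw [hp]
    exact Finset.sum_pos (fun i _ => pow_pos (hpos i) 2) ⟨0, mem_univ 0⟩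
  -- α j0 ≥ x * σ j0
  have hq : x * σ j0 ≤ α j0 := by
    have hsum : x * p + 1 ≤ ∑ i, σ i * (α i + 1) := by
      have he : ∑ i, σ i * (α i + 1) = (∑ i, σ i * α i) + ∑ i, σ i := by
        rw [← Finset.sum_add_distrib]
        exact Finset.sum_congr rfl fun i _ => by ring
      rw [he]; omega
    have h2 : σ j0 * (∑ i, σ i * (α i + 1)) ≤ p * (α j0 + 1) := by
      rw [Finset.mul_sum, hp, Finset.sum_mul]
      refine Finset.sum_le_sum fun i _ => ?_
      calc σ j0 * (σ i * (α i + 1)) = σ i * (σ j0 * (α i + 1)) := by ring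
      _ ≤ σ i * (σ i * (α j0 + 1)) := Nat.mul_le_mul_left _ (hmax i)
      _ = σ i ^ 2 * (α j0 + 1) := by ring
    by_contra hcon
    push_neg at hcon
    have h3 : α j0 + 1 ≤ x * σ j0 := hcon
    have h4 : σ j0 * (x * p + 1) ≤ p * (α j0 + 1) :=
      le_trans (Nat.mul_le_mul_left _ hsum) h2
    have h5 : p * (α j0 + 1) ≤ p * (x * σ j0) := Nat.mul_le_mul_left _ h3
    nlinarith [hpos j0]
  have hq1 : 1 ≤ α j0 := le_trans (Nat.mul_pos hx (hpos j0)) hq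
  -- changemaker subset with sum σ j0 - 1
  have hsle : σ j0 - 1 ≤ ∑ i, σ i :=
    le_trans (Nat.sub_le _ _)
      (Finset.single_le_sum (fun i _ => Nat.zero_le _) (mem_univ j0))
  obtain ⟨A, hA⟩ := hcm (σ j0 - 1) hsle
  have hj0A : j0 ∉ A := by
    intro h
    have h1 : σ j0 ≤ ∑ i ∈ A, σ i :=
      Finset.single_le_sum (fun i _ => Nat.zero_le _) h
    rw [hA] at h1
    have := hpos j0
    omega
  -- the key bound on S = ∑_{i∈A} (α i + 1)
  have hS : (∑ i ∈ A, (α i + 1)) + x ≤ α j0 := by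
    have h1 : σ j0 * (∑ i ∈ A, (α i + 1)) ≤ (σ j0 - 1) * (α j0 + 1) := by
      rw [Finset.mul_sum, ← hA, Finset.sum_mul]
      exact Finset.sum_le_sum fun i _ => hmax i
    obtain ⟨t, ht⟩ : ∃ t, σ j0 = t + 1 := ⟨σ j0 - 1, by have := hpos j0; omega⟩
    rw [ht] at h1 hq
    simp only [Nat.add_sub_cancel] at h1
    nlinarith [h1, hq]
  -- the modified vector β
  set β : Fin (n + 1) → ℕ :=
    fun i => if i = j0 then α i - 1 else if i ∈ A then α i + 1 else α i with hβ
  -- value of β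
  have hβval : (∑ j, (σ j : ℤ) * (β j : ℤ)) = (∑ j, (σ j : ℤ) * (α j : ℤ)) - 1 := by
    have hpt : ∀ j, (σ j : ℤ) * (β j : ℤ) = (σ j : ℤ) * (α j : ℤ)
        + (if j ∈ A then (σ j : ℤ) else 0) - (if j = j0 then (σ j : ℤ) else 0) := by
      intro j
      by_cases h1 : j = j0
      · subst h1
        simp only [hβ, if_pos rfl, if_neg hj0A]
        rw [Nat.cast_sub hq1]
        push_cast
        ring
      · by_cases h2 : j ∈ A
        · simp only [hβ, if_neg h1, if_pos h2]
          push_cast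
          ring
        · simp only [hβ, if_neg h1, if_neg h2]
          push_cast
          ring
    rw [Finset.sum_congr rfl fun j _ => hpt j]
    rw [Finset.sum_sub_distrib, Finset.sum_add_distrib]
    rw [Finset.sum_ite_eq' Finset.univ j0 (fun j => (σ j : ℤ))]
    have hAsum : (∑ j, if j ∈ A then (σ j : ℤ) else 0) = (σ j0 : ℤ) - 1 := by
      rw [← Finset.sum_filter]
      have : Finset.univ.filter (· ∈ A) = A := by
        ext i; simp
      rw [this]
      have : (∑ i ∈ A, (σ i : ℤ)) = ((σ j0 - 1 : ℕ) : ℤ) := by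
        rw [← hA]; push_cast; ring
      rw [this, Nat.cast_sub (hpos j0)]
      push_cast; ring
    simp only [mem_univ, if_true]
    rw [hAsum]
    ring
  -- cost of β
  have hβcost : (∑ j, (β j : ℤ) * ((β j : ℤ) + 1)) + 2 * x
      ≤ ∑ j, (α j : ℤ) * ((α j : ℤ) + 1) := by
    have hpt : ∀ j, (β j : ℤ) * ((β j : ℤ) + 1) = (α j : ℤ) * ((α j : ℤ) + 1)
        + (if j ∈ A then 2 * (α j : ℤ) + 2 else 0)
        - (if j = j0 then 2 * (α j : ℤ) else 0) := by
      intro j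
      by_cases h1 : j = j0
      · subst h1
        simp only [hβ, if_pos rfl, if_neg hj0A]
        rw [Nat.cast_sub hq1]
        push_cast
        ring
      · by_cases h2 : j ∈ A
        · simp only [hβ, if_neg h1, if_pos h2]
          push_cast
          ring
        · simp only [hβ, if_neg h1, if_neg h2]
          push_cast
          ring
    rw [Finset.sum_congr rfl fun j _ => hpt j]
    rw [Finset.sum_sub_distrib, Finset.sum_add_distrib]
    rw [Finset.sum_ite_eq' Finset.univ j0 (fun j => 2 * (α j : ℤ))]
    simp only [mem_univ, if_true]
    have hAsum : (∑ j, if j ∈ A then 2 * (α j : ℤ) + 2 else 0)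
        = 2 * ((∑ i ∈ A, (α i + 1) : ℕ) : ℤ) := by
      rw [← Finset.sum_filter]
      have h3 : Finset.univ.filter (· ∈ A) = A := by
        ext i; simp
      rw [h3]
      push_cast
      rw [Finset.mul_sum]
      exact Finset.sum_congr rfl fun i _ => by ring
    rw [hAsum]
    have hSZ : 2 * ((∑ i ∈ A, (α i + 1) : ℕ) : ℤ) + 2 * (x : ℤ) ≤ 2 * (α j0 : ℤ) := by
      have : ((∑ i ∈ A, (α i + 1) : ℕ) : ℤ) + (x : ℤ) ≤ (α j0 : ℤ) := by
        exact_mod_cast hS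
      linarith
    linarith
  -- conclude
  have hβcostN : (∑ j, β j * (β j + 1)) + 2 * x ≤ ∑ j, α j * (α j + 1) := by
    have h1 : ((∑ j, β j * (β j + 1) : ℕ) : ℤ) + 2 * (x : ℤ)
        ≤ ((∑ j, α j * (α j + 1) : ℕ) : ℤ) := by
      push_cast
      exact_mod_cast hβcost
    exact_mod_cast h1
  have hxv1 : x ≤ v1 := by
    have := le_trans hβcostN hαc
    omega
  have hβc2 : (∑ j, β j * (β j + 1)) ≤ 2 * (v1 - x) := by
    have := le_trans (le_trans (Nat.le_add_left _ _) hβcostN) hαc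
    omega
  have hβvalN : a ≤ ∑ j, σ j * β j := by
    have h1 : ((∑ j, σ j * β j : ℕ) : ℤ) = ((∑ j, σ j * α j : ℕ) : ℤ) - 1 := by
      push_cast
      exact_mod_cast hβval
    have h2 : ((a : ℤ) + 1) ≤ ((∑ j, σ j * α j : ℕ) : ℤ) := by exact_mod_cast hval
    have : (a : ℤ) ≤ ((∑ j, σ j * β j : ℕ) : ℤ) := by omega
    exact_mod_cast this
  have hT : a ≤ Tcm σ (v1 - x) := le_trans hβvalN (le_Tcm σ (v1 - x) β hβc2)
  have hle : Vcm σ a ≤ v1 - x := Nat.sInf_le hT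
  omega
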